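/- Soundness of the first lifting rule: if every letter occurring in a regular expression E also belongs, as a one-letter string, to the language L(E), then L(E*) = L((x₁ + x₂ + ... + x_ℓ)*), where {x₁, ..., x_ℓ} is the set of letters occurring in E. -/

import Mathlib

open RegularExpression

/-- `letters E` is the set 𝒜(E) of letters occurring syntactically in `E`. -/
def letters {α : Type*} [DecidableEq α] : RegularExpression α → Finset α
  | RegularExpression.zero => ∅
  | RegularExpression.epsilon => ∅
  | RegularExpression.char a => {a}
  | RegularExpression.plus a b => letters a ∪ letters b
  | RegularExpression.comp a b => letters a ∪ letters b
  | RegularExpression.star a => letters a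

/-- The regular expression `x₁ + x₂ + ... + x_ℓ` built from a list of letters. -/
def sumChars {α : Type*} : List α → RegularExpression α :=
  fun l => (l.map RegularExpression.char).foldr RegularExpression.plus RegularExpression.zero

lemma mem_sumChars {α : Type*} (l : List α) (w : List α) :
    w ∈ (sumChars l).matches' ↔ ∃ x ∈ l, w = [x] := by
  induction l with
  | nil => simp [sumChars, RegularExpression.matches']
  | cons a t ih =>
    simp only [sumChars, List.map_cons, List.foldr_cons] at *
    have : w ∈ ((RegularExpression.char a).plus
        ((t.map RegularExpression.char).foldr RegularExpression.plus RegularExpression.zero)).matches'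
        ↔ w ∈ (RegularExpression.char a).matches' ∨
          w ∈ ((t.map RegularExpression.char).foldr RegularExpression.plus RegularExpression.zero).matches' :=
      Iff.rfl
    rw [this]
    simp only [RegularExpression.matches'_char, Set.mem_singleton_iff, ih]
    constructor
    · rintro (h | ⟨x, hx, rfl⟩)
      · exact ⟨a, List.mem_cons_self, h⟩
      · exact ⟨x, List.mem_cons_of_mem _ hx, rfl⟩
    · rintro ⟨x, hx, rfl⟩
      rcases List.mem_cons.mp hx with rfl | hx
      · exact Or.inl rfl
      · exact Or.inr ⟨x, hx, rfl⟩

lemma letters_of_matches {α : Type*} [DecidableEq α] (E : RegularExpression α) :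
    ∀ w ∈ E.matches', ∀ a ∈ w, a ∈ letters E := by
  induction E with
  | zero => intro w hw; simp [RegularExpression.matches'] at hw
  | epsilon =>
    intro w hw
    have hw' : w ∈ (1 : Language α) := hw
    rw [Language.mem_one] at hw'
    subst hw'; simp
  | char c =>
    intro w hw
    have hw' : w = [c] := hw
    subst hw'; simp [letters]
  | plus P Q ihP ihQ =>
    intro w hw a ha
    have hw' : w ∈ P.matches' ∨ w ∈ Q.matches' := hw
    clear hw
    simp only [letters, Finset.mem_union]
    rcases hw' with h | h
    · exact Or.inl (ihP w h a ha)
    · exact Or.inr (ihQ w h a ha)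
  | comp P Q ihP ihQ =>
    intro w hw a ha
    have hw' : w ∈ P.matches' * Q.matches' := hw
    rw [Language.mem_mul] at hw'
    obtain ⟨u, hu, v, hv, rfl⟩ := hw'
    simp only [letters, Finset.mem_union]
    rcases List.mem_append.mp ha with h | h
    · exact Or.inl (ihP u hu a h)
    · exact Or.inr (ihQ v hv a h)
  | star P ih =>
    intro w hw a ha
    have hw' : w ∈ KStar.kstar P.matches' := hw
    rw [Language.mem_kstar] at hw'
    obtain ⟨L, rfl, hL⟩ := hw'
    obtain ⟨y, hy, hay⟩ := List.mem_flatten.mp ha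
    exact ih y (hL y hy) a hay

/-- if 𝒜(E) = 𝒜₁(E) then `L(E*) = L((x₁ + ... + x_ℓ)*)`
where `{x₁, ..., x_ℓ}` = 𝒜(E). -/
theorem lifting_rule_one {α : Type*} [Fintype α] [DecidableEq α]
    (E : RegularExpression α) (l : List α)
    (hA : ∀ x : α, x ∈ letters E ↔ [x] ∈ E.matches')
    (hl : ∀ x : α, x ∈ l ↔ x ∈ letters E) :
    E.star.matches' = (sumChars l).star.matches' := by
  ext w
  rw [RegularExpression.matches'_star, RegularExpression.matches'_star,
    Language.mem_kstar, Language.mem_kstar]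
  constructor
  · rintro ⟨L, rfl, hL⟩
    refine ⟨(L.flatten).map (fun a => [a]), ?_, ?_⟩
    · have : ∀ w : List α, (w.map (fun a => [a])).flatten = w := by
        intro w; induction w with
        | nil => rfl
        | cons a t ih => simp [ih]
      exact (this L.flatten).symm
    · intro y hy
      obtain ⟨a, ha, rfl⟩ := List.mem_map.mp hy
      obtain ⟨u, hu, hau⟩ := List.mem_flatten.mp ha
      have : a ∈ letters E := letters_of_matches E u (hL u hu) a hau
      exact (mem_sumChars l [a]).mpr ⟨a, (hl a).mpr this, rfl⟩
  · rintro ⟨L, rfl, hL⟩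
    refine ⟨L, rfl, fun y hy => ?_⟩
    obtain ⟨x, hx, rfl⟩ := (mem_sumChars l y).mp (hL y hy)
    exact (hA x).mp ((hl x).mp hx)
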